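/- For every ε > 0 there exist an integer n and a set G of pairs (i,j) with 1 ≤ i < j ≤ n such that every subset G' ⊆ G with |G'| ≥ (1/4 + ε)·|G| contains an increasing path of length two, i.e., there exist indices i < j < k with (i,j) ∈ G' and (j,k) ∈ G'. -/

import Mathlib

open Finset

namespace OGIP

noncomputable def y (n : ℕ) (A : Finset ℕ) : ℕ → ℝ := fun i =>
  if i ∈ Finset.Ioc 0 n then (if i ∈ A then 1 else -1) else 0

variable (n : ℕ) (A : Finset ℕ)

lemma y_cases (i : ℕ) : y n A i = 0 ∨ y n A i = 1 ∨ y n A i = -1 := by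
  unfold y; split <;> [skip; tauto]
  split <;> tauto

lemma y_bd (i : ℕ) : -1 ≤ y n A i ∧ y n A i ≤ 1 := by
  rcases y_cases n A i with h | h | h <;> rw [h] <;> norm_num

lemma y_prod_bd (i j : ℕ) : -1 ≤ y n A i * y n A j ∧ y n A i * y n A j ≤ 1 := by
  obtain ⟨h1, h2⟩ := y_bd n A i
  obtain ⟨h3, h4⟩ := y_bd n A j
  constructor <;> nlinarith

lemma sum_bd {s : Finset ℕ} {f : ℕ → ℝ} (h : ∀ i ∈ s, -1 ≤ f i ∧ f i ≤ 1) :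
    -(s.card : ℝ) ≤ ∑ i ∈ s, f i ∧ ∑ i ∈ s, f i ≤ s.card := by
  constructor
  · have := Finset.card_nsmul_le_sum s f (-1) (fun i hi => (h i hi).1)
    simpa using this
  · have := Finset.sum_le_card_nsmul s f 1 (fun i hi => (h i hi).2)
    simpa using this

lemma y_zero_of_gt {i : ℕ} (h : n < i) : y n A i = 0 := by
  unfold y; rw [if_neg]; simp; omega

lemma telescope {t : ℕ} (ht : t ≤ n) :
    ∑ i ∈ Ioc 0 (n - t), (y n A i - y n A (i + t)) ≤ 2 * t := by
  have hmap : ∑ i ∈ Ioc 0 (n - t), y n A (i + t) = ∑ j ∈ Ioc t n, y n A j := by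
    have h := map_add_right_Ioc 0 (n - t) t
    rw [Nat.zero_add, Nat.sub_add_cancel ht] at h
    rw [← h, Finset.sum_map]
    rfl
  rw [Finset.sum_sub_distrib, hmap]
  have A1 : (∑ i ∈ Ioc 0 (n - t), y n A i) + ∑ i ∈ Ioc (n - t) n, y n A i
      = ∑ i ∈ Ioc 0 n, y n A i := sum_Ioc_consecutive _ (Nat.zero_le _) (Nat.sub_le n t)
  have A2 : (∑ i ∈ Ioc 0 t, y n A i) + ∑ i ∈ Ioc t n, y n A i
      = ∑ i ∈ Ioc 0 n, y n A i := sum_Ioc_consecutive _ (Nat.zero_le _) ht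
  have B1 : ∑ i ∈ Ioc 0 t, y n A i ≤ t := by
    have := (sum_bd (s := Ioc 0 t) (fun i _ => y_bd n A i)).2
    simpa [Nat.card_Ioc] using this
  have B2 : -(t:ℝ) ≤ ∑ i ∈ Ioc (n-t) n, y n A i := by
    have h := (sum_bd (s := Ioc (n-t) n) (fun i _ => y_bd n A i)).1
    have hc : ((Ioc (n-t) n).card : ℝ) ≤ t := by
      rw [Nat.card_Ioc]
      have h2 : n - (n - t) ≤ t := by omega
      exact_mod_cast h2
    linarith
  linarith

lemma claim1 {t : ℕ} (ht1 : 1 ≤ t) (ht : t ≤ n) :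
    (((Ioc 0 (n - t)).filter (fun i => i ∈ A ∧ i + t ∉ A)).card : ℝ)
      ≤ (t:ℝ)/2 + ((n:ℝ) - t)/4 - (∑ i ∈ Ioc 0 (n - t), y n A i * y n A (i + t))/4 := by
  have hcard : (((Ioc 0 (n - t)).filter (fun i => i ∈ A ∧ i + t ∉ A)).card : ℝ)
      = ∑ i ∈ Ioc 0 (n - t), (if i ∈ A ∧ i + t ∉ A then (1:ℝ) else 0) := by
    rw [Finset.card_filter]
    push_cast
    exact Finset.sum_congr rfl (fun i _ => by split <;> norm_num)
  have hpt : ∀ i ∈ Ioc 0 (n - t), (if i ∈ A ∧ i + t ∉ A then (1:ℝ) else 0)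
      = (y n A i - y n A (i + t))/4 + (1 - y n A i * y n A (i + t))/4 := by
    intro i hi
    rw [Finset.mem_Ioc] at hi
    have h1 : i ∈ Ioc 0 n := by rw [Finset.mem_Ioc]; omega
    have h2 : i + t ∈ Ioc 0 n := by rw [Finset.mem_Ioc]; omega
    unfold y
    rw [if_pos h1, if_pos h2]
    by_cases hA : i ∈ A <;> by_cases hB : i + t ∈ A <;> simp [hA, hB] <;> norm_num
  rw [hcard, Finset.sum_congr rfl hpt, Finset.sum_add_distrib]
  have e1 : ∑ i ∈ Ioc 0 (n - t), (y n A i - y n A (i + t))/4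
      = (∑ i ∈ Ioc 0 (n - t), (y n A i - y n A (i + t)))/4 := by
    rw [Finset.sum_div]
  have e2 : ∑ i ∈ Ioc 0 (n - t), (1 - y n A i * y n A (i + t))/4
      = (((n:ℝ) - t) - ∑ i ∈ Ioc 0 (n - t), y n A i * y n A (i + t))/4 := by
    rw [← Finset.sum_div, Finset.sum_sub_distrib, Finset.sum_const, Nat.card_Ioc]
    have h0 : n - t - 0 = n - t := by omega
    rw [h0, nsmul_eq_mul, mul_one, Nat.cast_sub ht]
  rw [e1, e2]
  have := telescope n A ht
  linarith

lemma sym_split (P : ℕ → ℕ → ℝ) (hsym : ∀ e f, P e f = P f e) (k : ℕ) :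
    ∑ e ∈ range k, ∑ f ∈ range k, P e f
      = (∑ e ∈ range k, P e e) + 2 * ∑ e ∈ range k, ∑ f ∈ range e, P e f := by
  induction k with
  | zero => simp
  | succ k ih =>
    have expand : ∑ e ∈ range (k+1), ∑ f ∈ range (k+1), P e f
        = (∑ e ∈ range k, ∑ f ∈ range k, P e f) + (∑ f ∈ range k, P k f)
          + (∑ e ∈ range k, P e k) + P k k := by
      rw [Finset.sum_range_succ]
      have h1 : ∀ e, ∑ f ∈ range (k+1), P e f = (∑ f ∈ range k, P e f) + P e k :=
        fun e => Finset.sum_range_succ _ _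
      rw [Finset.sum_congr rfl (fun e _ => h1 e), Finset.sum_add_distrib, h1 k]
      ring
    rw [expand, ih, Finset.sum_range_succ (fun e => P e e),
      Finset.sum_range_succ (fun e => ∑ f ∈ range e, P e f)]
    have h2 : ∑ e ∈ range k, P e k = ∑ f ∈ range k, P k f :=
      Finset.sum_congr rfl (fun e _ => hsym e k)
    rw [h2]; ring

lemma sos (k : ℕ) (y : ℕ → ℝ) :
    0 ≤ ∑ e ∈ range k, ∑ f ∈ range k,
        ∑ i ∈ range (n+1), y (i + 2^e) * y (i + 2^f) := by
  have key : ∑ e ∈ range k, ∑ f ∈ range k, ∑ i ∈ range (n+1), y (i + 2^e) * y (i + 2^f)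
      = ∑ i ∈ range (n+1), (∑ e ∈ range k, y (i + 2^e))^2 := by
    have h1 : ∀ i, (∑ e ∈ range k, y (i + 2^e))^2
        = ∑ e ∈ range k, ∑ f ∈ range k, y (i + 2^e) * y (i + 2^f) := by
      intro i; rw [sq, Finset.sum_mul_sum]
    rw [Finset.sum_congr rfl (fun i _ => h1 i)]
    have c1 : ∀ e ∈ range k, ∑ f ∈ range k, ∑ i ∈ range (n+1), y (i + 2^e) * y (i + 2^f)
        = ∑ i ∈ range (n+1), ∑ f ∈ range k, y (i + 2^e) * y (i + 2^f) :=
      fun e _ => Finset.sum_comm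
    rw [Finset.sum_congr rfl c1]
    exact Finset.sum_comm
  rw [key]
  exact Finset.sum_nonneg (fun i _ => sq_nonneg _)

lemma diag_bd (e : ℕ) :
    ∑ i ∈ range (n+1), y n A (i + 2^e) * y n A (i + 2^e) ≤ (n:ℝ) + 1 := by
  have := (sum_bd (s := range (n+1))
    (f := fun i => y n A (i + 2^e) * y n A (i + 2^e))
    (fun i _ => y_prod_bd n A _ _)).2
  simpa using this

lemma claim2 {e f : ℕ} (hf : f < e) (hen : 2^e + 2^e ≤ n) :
    (∑ i ∈ range (n+1), y n A (i + 2^e) * y n A (i + 2^f)) - 2^f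
      ≤ ∑ i ∈ Ioc 0 (n - (2^e - 2^f)), y n A i * y n A (i + (2^e - 2^f)) := by
  set a := 2^f with ha
  set t := 2^e - 2^f with htdef
  have hfe : (2:ℕ)^f < 2^e := Nat.pow_lt_pow_right (by norm_num) hf
  have ha1 : 1 ≤ a := Nat.one_le_two_pow
  have hat : a + t = 2^e := by omega
  have ht1 : 1 ≤ t := by omega
  have htn : t ≤ n := by omega
  have han : a - 1 ≤ n - t := by omega
  -- rewrite P pointwise
  have hP : ∑ i ∈ range (n+1), y n A (i + 2^e) * y n A (i + 2^f)
      = ∑ i ∈ range (n+1), y n A (i + a) * y n A ((i + a) + t) := by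
    apply Finset.sum_congr rfl
    intro i _
    have h1 : i + 2^e = (i + a) + t := by omega
    have h2 : i + 2^f = i + a := by omega
    rw [h1, h2, mul_comm]
  -- reindex to Icc a (n+a)
  have hP2 : ∑ i ∈ range (n+1), y n A (i + a) * y n A ((i + a) + t)
      = ∑ j ∈ Icc a (n + a), y n A j * y n A (j + t) := by
    have hr : range (n+1) = Icc 0 n := by
      rw [Finset.range_eq_Ico, Finset.Ico_add_one_right_eq_Icc]
    have hm := map_add_right_Icc 0 n a
    rw [Nat.zero_add] at hm
    rw [hr, ← hm, Finset.sum_map]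
    rfl
  -- drop zero terms
  have hP3 : ∑ j ∈ Icc a (n + a), y n A j * y n A (j + t)
      = ∑ j ∈ Icc a (n - t), y n A j * y n A (j + t) := by
    symm
    apply Finset.sum_subset
    · apply Finset.Icc_subset_Icc_right; omega
    · intro j hj hj2
      rw [Finset.mem_Icc] at hj hj2
      have : n < j + t := by omega
      have hz : y n A (j + t) = 0 := y_zero_of_gt n A this
      rw [hz, mul_zero]
  -- split C
  have hsplit : (∑ j ∈ Ioc 0 (a-1), y n A j * y n A (j + t))
      + ∑ j ∈ Ioc (a-1) (n - t), y n A j * y n A (j + t)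
      = ∑ j ∈ Ioc 0 (n - t), y n A j * y n A (j + t) :=
    sum_Ioc_consecutive _ (Nat.zero_le _) han
  have hIcc : Ioc (a-1) (n - t) = Icc a (n - t) := by
    have h9 : a - 1 + 1 = a := by omega
    rw [← Finset.Icc_add_one_left_eq_Ioc]
    congr 1
  have hbd : -(((a - 1 : ℕ)) : ℝ) ≤ ∑ j ∈ Ioc 0 (a-1), y n A j * y n A (j + t) := by
    have := (sum_bd (s := Ioc 0 (a-1))
      (f := fun j => y n A j * y n A (j + t)) (fun i _ => y_prod_bd n A _ _)).1
    simpa [Nat.card_Ioc] using this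
  rw [hP, hP2, hP3, ← hsplit, hIcc]
  have hlt : ((a - 1 : ℕ) : ℝ) < (2:ℝ)^f := by
    have h3 : (a - 1 : ℕ) < 2^f := by omega
    exact_mod_cast h3
  linarith
def dd (q : ℕ × ℕ) : ℕ := 2^q.1 - 2^q.2

lemma pow_lt_case {e f e' f' : ℕ} (hfe : f < e) (hf'e' : f' < e') (hee : e < e')
    (key : 2^e + 2^f' = 2^e' + 2^f) : False := by
  have h1 : (2:ℕ)^e ≤ 2^(e'-1) := Nat.pow_le_pow_right (by norm_num) (by omega)
  have h2 : (2:ℕ)^f' ≤ 2^(e'-1) := Nat.pow_le_pow_right (by norm_num) (by omega)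
  have h3 : (2:ℕ)^(e'-1) + 2^(e'-1) = 2^e' := by
    have h5 : e' - 1 + 1 = e' := by omega
    calc (2:ℕ)^(e'-1) + 2^(e'-1) = 2^(e'-1) * 2 := by ring
    _ = 2^(e'-1+1) := (pow_succ 2 (e'-1)).symm
    _ = 2^e' := by rw [h5]
  have h4 : (1:ℕ) ≤ 2^f := Nat.one_le_two_pow
  omega

lemma dd_inj {q q' : ℕ × ℕ} (h : q.2 < q.1) (h' : q'.2 < q'.1) (heq : dd q = dd q') :
    q = q' := by
  obtain ⟨e, f⟩ := q
  obtain ⟨e', f'⟩ := q'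
  simp only [dd] at heq
  simp only at h h'
  have h1 : (2:ℕ)^f < 2^e := Nat.pow_lt_pow_right (by norm_num) h
  have h2 : (2:ℕ)^f' < 2^e' := Nat.pow_lt_pow_right (by norm_num) h'
  have key : 2^e + 2^f' = 2^e' + 2^f := by omega
  rcases lt_trichotomy e e' with hlt | hEq | hgt
  · exact absurd (pow_lt_case h h' hlt key) (fun x => x)
  · subst hEq
    have : (2:ℕ)^f' = 2^f := by omega
    have : f' = f := Nat.pow_right_injective (by norm_num) this
    simp [this]
  · exact absurd (pow_lt_case h' h hgt key.symm) (fun x => x)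

def PP (k : ℕ) : Finset (ℕ × ℕ) :=
  (range k).biUnion (fun e => (range e).image (fun f => (e, f)))

lemma mem_PP {k : ℕ} {q : ℕ × ℕ} : q ∈ PP k ↔ q.1 < k ∧ q.2 < q.1 := by
  obtain ⟨a, b⟩ := q
  simp only [PP, Finset.mem_biUnion, Finset.mem_image, Finset.mem_range]
  constructor
  · rintro ⟨e, he, f, hf, h⟩
    obtain ⟨rfl, rfl⟩ := Prod.mk.injEq .. ▸ h
    cases h
    exact ⟨he, hf⟩
  · rintro ⟨h1, h2⟩
    exact ⟨a, h1, b, h2, rfl⟩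

lemma card_PP (k : ℕ) : (PP k).card * 2 = k * (k - 1) := by
  rw [PP, Finset.card_biUnion]
  · have h : ∀ e ∈ range k, ((range e).image (fun f => (e, f))).card = e := by
      intro e _
      rw [Finset.card_image_of_injective, Finset.card_range]
      intro a b hab
      simpa using hab
    rw [Finset.sum_congr rfl h]
    exact Finset.sum_range_id_mul_two k
  · intro x _ z _ hxz
    rw [Function.onFun, Finset.disjoint_left]
    intro p hp hp2
    rw [Finset.mem_image] at hp hp2
    obtain ⟨f1, _, rfl⟩ := hp
    obtain ⟨f2, _, h2⟩ := hp2
    exact hxz (by cases h2; rfl)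

lemma dd_pos {k : ℕ} {q : ℕ × ℕ} (h : q ∈ PP k) : 1 ≤ dd q := by
  rw [mem_PP] at h
  have : (2:ℕ)^q.2 < 2^q.1 := Nat.pow_lt_pow_right (by norm_num) h.2
  unfold dd; omega

lemma dd_lt {k : ℕ} {q : ℕ × ℕ} (h : q ∈ PP k) : dd q < 2^k := by
  rw [mem_PP] at h
  have h1 : (2:ℕ)^q.1 < 2^k := Nat.pow_lt_pow_right (by norm_num) h.1
  have h2 : dd q ≤ 2^q.1 := Nat.sub_le _ _
  omega

def GG (n k : ℕ) : Finset (ℕ × ℕ) :=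
  (PP k).biUnion (fun q => (Ioc 0 (n - dd q)).image (fun i => (i, i + dd q)))

lemma mem_GG {n k : ℕ} {p : ℕ × ℕ} :
    p ∈ GG n k ↔ ∃ q ∈ PP k, ∃ i ∈ Ioc 0 (n - dd q), p = (i, i + dd q) := by
  simp only [GG, Finset.mem_biUnion, Finset.mem_image]
  constructor
  · rintro ⟨q, hq, i, hi, rfl⟩; exact ⟨q, hq, i, hi, rfl⟩
  · rintro ⟨q, hq, i, hi, rfl⟩; exact ⟨q, hq, i, hi, rfl⟩

lemma card_GG (n k : ℕ) : (GG n k).card = ∑ q ∈ PP k, (n - dd q) := by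
  rw [GG, Finset.card_biUnion]
  · apply Finset.sum_congr rfl
    intro q _
    rw [Finset.card_image_of_injective, Nat.card_Ioc]
    · omega
    · intro a b hab
      have := congrArg Prod.fst hab
      simpa using this
  · intro q hq q' hq' hne
    rw [Function.onFun, Finset.disjoint_left]
    intro p hp hp'
    rw [Finset.mem_image] at hp hp'
    obtain ⟨i, _, rfl⟩ := hp
    obtain ⟨i', _, h2⟩ := hp'
    have hi : i' = i := (Prod.mk.injEq .. ▸ h2).1
    subst hi
    have : dd q' = dd q := by
      have := (Prod.mk.injEq .. ▸ h2).2; omega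
    exact hne (dd_inj ((mem_PP).mp hq).2 ((mem_PP).mp hq').2 this.symm)



lemma final {e Gc G'c s Kr M nr : ℝ}
    (he : 0 < e) (hKr : 3 ≤ Kr) (hM2 : 2 ≤ M) (hnr : nr = 8*Kr*M)
    (hKe : 4 ≤ e*(Kr-1)) (hsK : s*2 = Kr*(Kr-1))
    (hcard : (1/4 + e) * Gc ≤ G'c)
    (hup : G'c ≤ s*M/2 + Gc/4 + (Kr*(nr+1)/2 + s*M)/4)
    (hGc_low : s*(nr - M) ≤ Gc) : False := by
  have hes : 2*Kr ≤ e * s := by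
    nlinarith [mul_nonneg (by linarith : (0:ℝ) ≤ e*(Kr-1) - 4) (by linarith : (0:ℝ) ≤ Kr)]
  have hnM : (0:ℝ) ≤ nr - M := by nlinarith
  have heGc : (e*s) * (nr - M) ≤ e * Gc := by
    rw [mul_assoc]
    exact mul_le_mul_of_nonneg_left hGc_low (le_of_lt he)
  have h2 : 2*Kr * (nr - M) ≤ (e*s) * (nr - M) := mul_le_mul_of_nonneg_right hes hnM
  have hfin : e * Gc ≤ (3/4)*s*M + Kr*(nr+1)/8 := by linarith
  nlinarith [mul_nonneg (by linarith : (0:ℝ) ≤ Kr) (by linarith : (0:ℝ) ≤ M),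
    mul_nonneg (mul_nonneg (by linarith : (0:ℝ) ≤ Kr) (by linarith : (0:ℝ) ≤ Kr)) (by linarith : (0:ℝ) ≤ M)]

lemma PP_disj (k : ℕ) : ∀ x ∈ range k, ∀ z ∈ range k, x ≠ z →
    Disjoint ((range x).image (fun f => (x, f))) ((range z).image (fun f => (z, f))) := by
  intro x _ z _ hxz
  rw [Finset.disjoint_left]
  intro p hp hp2
  rw [Finset.mem_image] at hp hp2
  obtain ⟨f1, _, rfl⟩ := hp
  obtain ⟨f2, _, h2⟩ := hp2
  exact hxz (by cases h2; rfl)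

end OGIP

open OGIP

/-- For every `ε > 0` there is an ordered graph `G` (a set of pairs `(i,j)`,
`1 ≤ i < j ≤ n`) such that every `G' ⊆ G` with `|G'| ≥ (1/4 + ε)·|G|` contains an
increasing path of length two. -/
theorem exists_ordered_graph_incr_path_two (ε : ℝ) (hε : 0 < ε) :
    ∃ (n : ℕ) (G : Finset (ℕ × ℕ)), (∀ p ∈ G, 1 ≤ p.1 ∧ p.1 < p.2 ∧ p.2 ≤ n) ∧
      ∀ G' ⊆ G, (1/4 + ε) * G.card ≤ (G'.card : ℝ) →
        ∃ i j k : ℕ, i < j ∧ j < k ∧ (i, j) ∈ G' ∧ (j, k) ∈ G' := by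
  classical
  obtain ⟨K, hK3, hKε⟩ : ∃ K : ℕ, 3 ≤ K ∧ 4 ≤ ε * ((K:ℝ) - 1) := by
    have hc1 : 1 ≤ ⌈(4:ℝ)/ε⌉₊ := Nat.one_le_ceil_iff.mpr (by positivity)
    refine ⟨⌈(4:ℝ)/ε⌉₊ + 2, by omega, ?_⟩
    have h1 : (4:ℝ)/ε ≤ ⌈(4:ℝ)/ε⌉₊ := Nat.le_ceil _
    have h2 : ((⌈(4:ℝ)/ε⌉₊ + 2 : ℕ) : ℝ) - 1 = (⌈(4:ℝ)/ε⌉₊ : ℝ) + 1 := by push_cast; ring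
    rw [h2]
    have h4 : ε * ((4:ℝ)/ε) = 4 := mul_div_cancel₀ _ (ne_of_gt hε)
    nlinarith
  set n : ℕ := 8 * K * 2^K with hn
  have h2K : (2:ℕ)^K ≤ n := by
    have h1 : 1 * 2^K ≤ 8 * K * 2^K := Nat.mul_le_mul_right _ (by omega)
    omega
  have hdn : ∀ q ∈ PP K, dd q ≤ n := fun q hq => le_trans (le_of_lt (dd_lt hq)) h2K
  refine ⟨n, GG n K, ?_, ?_⟩
  · intro p hp
    obtain ⟨q, hq, i, hi, rfl⟩ := mem_GG.mp hp
    rw [Finset.mem_Ioc] at hi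
    have h1 := dd_pos hq
    have h2 := hdn q hq
    refine ⟨by simp; omega, by simp; omega, by simp; omega⟩
  · intro G' hsub hcard
    by_contra hno
    push_neg at hno
    set A : Finset ℕ := G'.image Prod.fst with hA
    set T : Finset ℕ := (PP K).image dd with hT
    have hT1 : ∀ t ∈ T, 1 ≤ t ∧ t ≤ n := by
      intro t ht
      obtain ⟨q, hq, rfl⟩ := Finset.mem_image.mp ht
      exact ⟨dd_pos hq, hdn q hq⟩
    have hstr : ∀ p ∈ G', ∃ t i : ℕ, p = (i, i + t) ∧ t ∈ T ∧ i ∈ Finset.Ioc 0 (n - t) := by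
      intro p hp
      obtain ⟨q, hq, i, hi, rfl⟩ := mem_GG.mp (hsub hp)
      exact ⟨dd q, i, rfl, Finset.mem_image_of_mem _ hq, hi⟩
    have hfib : G'.card = ∑ t ∈ T, (G'.filter (fun p => p.2 - p.1 = t)).card := by
      apply Finset.card_eq_sum_card_fiberwise
      intro p hp
      obtain ⟨t, i, rfl, ht, _⟩ := hstr p hp
      have he : (i + t) - i = t := by omega
      simpa [he] using ht
    have hNt : ∀ t ∈ T, (G'.filter (fun p => p.2 - p.1 = t)).card
        ≤ ((Finset.Ioc 0 (n - t)).filter (fun i => i ∈ A ∧ i + t ∉ A)).card := by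
      intro t ht
      apply Finset.card_le_card_of_injOn (fun p => p.1)
      · intro p hp
        rw [Finset.mem_coe, Finset.mem_filter] at hp
        obtain ⟨hp1, hp2⟩ := hp
        obtain ⟨t', i, rfl, ht', hi⟩ := hstr p hp1
        have htt : t' = t := by simpa using hp2
        subst htt
        rw [Finset.mem_coe, Finset.mem_filter]
        refine ⟨hi, Finset.mem_image.mpr ⟨(i, i + t'), hp1, rfl⟩, ?_⟩
        intro hcon
        obtain ⟨p', hp', hp'e⟩ := Finset.mem_image.mp hcon
        obtain ⟨s, i', rfl, hs, hi'⟩ := hstr p' hp'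
        have hi'e : i' = i + t' := by simpa using hp'e
        subst hi'e
        obtain ⟨q, hq, hsq⟩ := Finset.mem_image.mp hs
        have hs1 : 1 ≤ s := by rw [← hsq]; exact dd_pos hq
        have ht1 : 1 ≤ t' := (hT1 t' ht).1
        exact hno i (i + t') ((i + t') + s) (by omega) (by omega) hp1 hp'
      · intro p hp p' hp' hpp
        simp only [Finset.mem_coe, Finset.mem_filter] at hp hp'
        obtain ⟨t1, i1, rfl, _, _⟩ := hstr _ hp.1
        obtain ⟨t2, i2, rfl, _, _⟩ := hstr _ hp'.1
        have e1 : t1 = t := by simpa using hp.2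
        have e2 : t2 = t := by simpa using hp'.2
        have e3 : i1 = i2 := by simpa using hpp
        subst e1; subst e2; subst e3
        rfl
    -- real-valued chain
    have step1 : G'.card ≤ ∑ t ∈ T, ((Finset.Ioc 0 (n - t)).filter
        (fun i => i ∈ A ∧ i + t ∉ A)).card := hfib ▸ Finset.sum_le_sum hNt
    have step2 : (G'.card : ℝ) ≤ ∑ t ∈ T, ((t:ℝ)/2 + ((n:ℝ) - t)/4
        - (∑ i ∈ Finset.Ioc 0 (n - t), y n A i * y n A (i + t))/4) := by
      calc (G'.card : ℝ) ≤ ((∑ t ∈ T, ((Finset.Ioc 0 (n - t)).filter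
            (fun i => i ∈ A ∧ i + t ∉ A)).card : ℕ) : ℝ) := Nat.cast_le.mpr step1
      _ = ∑ t ∈ T, (((Finset.Ioc 0 (n - t)).filter
            (fun i => i ∈ A ∧ i + t ∉ A)).card : ℝ) := by push_cast; rfl
      _ ≤ _ := Finset.sum_le_sum (fun t ht => claim1 n A (hT1 t ht).1 (hT1 t ht).2)
    have hddinj : ∀ q ∈ PP K, ∀ q' ∈ PP K, dd q = dd q' → q = q' :=
      fun q hq q' hq' h => dd_inj (mem_PP.mp hq).2 (mem_PP.mp hq').2 h
    have step3 : ∑ t ∈ T, ((t:ℝ)/2 + ((n:ℝ) - t)/4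
        - (∑ i ∈ Finset.Ioc 0 (n - t), y n A i * y n A (i + t))/4)
        = ∑ q ∈ PP K, (((dd q):ℝ)/2 + ((n:ℝ) - dd q)/4
        - (∑ i ∈ Finset.Ioc 0 (n - dd q), y n A i * y n A (i + dd q))/4) := by
      rw [hT]
      exact Finset.sum_image hddinj
    have step4 : ∑ q ∈ PP K, (((dd q):ℝ)/2 + ((n:ℝ) - dd q)/4
        - (∑ i ∈ Finset.Ioc 0 (n - dd q), y n A i * y n A (i + dd q))/4)
        = (∑ q ∈ PP K, ((dd q):ℝ))/2 + (∑ q ∈ PP K, ((n:ℝ) - dd q))/4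
          - (∑ q ∈ PP K, ∑ i ∈ Finset.Ioc 0 (n - dd q), y n A i * y n A (i + dd q))/4 := by
      rw [Finset.sum_sub_distrib, Finset.sum_add_distrib, Finset.sum_div, Finset.sum_div,
        Finset.sum_div]
    -- bound the three sums
    have hS1 : ∑ q ∈ PP K, ((dd q):ℝ) ≤ ((PP K).card : ℝ) * 2^K := by
      have := Finset.sum_le_card_nsmul (PP K) (fun q => ((dd q):ℝ)) ((2:ℝ)^K)
        (fun q hq => by
          show ((dd q : ℕ) : ℝ) ≤ (2:ℝ)^K
          exact_mod_cast le_of_lt (dd_lt hq))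
      simpa [nsmul_eq_mul] using this
    have hS2 : ∑ q ∈ PP K, ((n:ℝ) - dd q) = ((GG n K).card : ℝ) := by
      rw [card_GG]
      push_cast
      refine Finset.sum_congr rfl (fun q hq => ?_)
      rw [Nat.cast_sub (hdn q hq)]
    have hO : -((K:ℝ)*((n:ℝ)+1))/2 ≤ ∑ e ∈ range K, ∑ f ∈ range e,
        ∑ i ∈ range (n+1), y n A (i + 2^e) * y n A (i + 2^f) := by
      have h0 := sos n K (y n A)
      have hsplit := sym_split
        (fun e f => ∑ i ∈ range (n+1), y n A (i + 2^e) * y n A (i + 2^f))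
        (fun e f => Finset.sum_congr rfl (fun i _ => mul_comm _ _)) K
      have hD : ∑ e ∈ range K, ∑ i ∈ range (n+1), y n A (i + 2^e) * y n A (i + 2^e)
          ≤ (K:ℝ)*((n:ℝ)+1) := by
        have := Finset.sum_le_card_nsmul (range K)
          (fun e => ∑ i ∈ range (n+1), y n A (i + 2^e) * y n A (i + 2^e))
          ((n:ℝ)+1) (fun e _ => diag_bd n A e)
        simpa [nsmul_eq_mul, mul_add, mul_one] using this
      rw [hsplit] at h0
      linarith
    have hPPO : ∑ q ∈ PP K, (∑ i ∈ range (n+1), y n A (i + 2^q.1) * y n A (i + 2^q.2))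
        = ∑ e ∈ range K, ∑ f ∈ range e,
          ∑ i ∈ range (n+1), y n A (i + 2^e) * y n A (i + 2^f) := by
      rw [PP, Finset.sum_biUnion]
      · refine Finset.sum_congr rfl (fun e _ => ?_)
        rw [Finset.sum_image]
        intro a _ b _ hab
        simpa using hab
      · intro x hx z hz hxz
        exact PP_disj K x hx z hz hxz
    have hS3 : -((K:ℝ)*((n:ℝ)+1))/2 - ((PP K).card : ℝ) * 2^K
        ≤ ∑ q ∈ PP K, ∑ i ∈ Finset.Ioc 0 (n - dd q), y n A i * y n A (i + dd q) := by
      have hper : ∀ q ∈ PP K,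
          (∑ i ∈ range (n+1), y n A (i + 2^q.1) * y n A (i + 2^q.2)) - (2:ℝ)^K
          ≤ ∑ i ∈ Finset.Ioc 0 (n - dd q), y n A i * y n A (i + dd q) := by
        intro q hq
        have hm := mem_PP.mp hq
        have hen : 2^q.1 + 2^q.1 ≤ n := by
          have h1 : (2:ℕ)^q.1 * 2 = 2^(q.1+1) := (pow_succ 2 q.1).symm
          have h2 : (2:ℕ)^(q.1+1) ≤ 2^K := Nat.pow_le_pow_right (by norm_num) (by omega)
          omega
        have hc2 := claim2 n A hm.2 hen
        have hfle : (2:ℝ)^q.2 ≤ (2:ℝ)^K :=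
          pow_le_pow_right₀ (by norm_num) (by omega)
        have hddq : dd q = 2^q.1 - 2^q.2 := rfl
        rw [hddq]
        linarith
      calc -((K:ℝ)*((n:ℝ)+1))/2 - ((PP K).card : ℝ) * 2^K
          ≤ (∑ q ∈ PP K, (∑ i ∈ range (n+1), y n A (i + 2^q.1) * y n A (i + 2^q.2)))
            - ((PP K).card : ℝ) * 2^K := by
            rw [hPPO]; linarith [hO]
      _ = ∑ q ∈ PP K, ((∑ i ∈ range (n+1), y n A (i + 2^q.1) * y n A (i + 2^q.2)) - (2:ℝ)^K) := by
            rw [Finset.sum_sub_distrib, Finset.sum_const, nsmul_eq_mul]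
      _ ≤ _ := Finset.sum_le_sum hper
    -- assemble upper bound on G'
    have key := step2
    rw [step3, step4, hS2] at key
    have hGc_low : ((PP K).card : ℝ) * ((n:ℝ) - 2^K) ≤ ((GG n K).card : ℝ) := by
      rw [← hS2]
      have := Finset.card_nsmul_le_sum (PP K) (fun q => (n:ℝ) - (dd q : ℝ)) ((n:ℝ) - 2^K)
        (fun q hq => by
          show (n:ℝ) - 2^K ≤ (n:ℝ) - (dd q : ℝ)
          have h1 : ((dd q : ℕ) : ℝ) ≤ (2:ℝ)^K := by exact_mod_cast le_of_lt (dd_lt hq)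
          linarith)
      simpa [nsmul_eq_mul] using this
    have hsK : ((PP K).card : ℝ) * 2 = (K:ℝ) * ((K:ℝ) - 1) := by
      have h := card_PP K
      have h2 : (((PP K).card * 2 : ℕ) : ℝ) = ((K * (K-1) : ℕ) : ℝ) := by rw [h]
      push_cast [Nat.cast_sub (by omega : 1 ≤ K)] at h2
      linarith
    have hKr : (3:ℝ) ≤ (K:ℝ) := by exact_mod_cast hK3
    have hM2 : (2:ℝ) ≤ (2:ℝ)^K := by
      calc (2:ℝ) = 2^1 := (pow_one 2).symm
      _ ≤ 2^K := pow_le_pow_right₀ one_le_two (by omega)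
    have hnr : (n:ℝ) = 8 * (K:ℝ) * 2^K := by rw [hn]; push_cast; ring
    have hup : (G'.card : ℝ) ≤ ((PP K).card : ℝ)*2^K/2 + ((GG n K).card : ℝ)/4
        + ((K:ℝ)*((n:ℝ)+1)/2 + ((PP K).card : ℝ)*2^K)/4 := by
      linarith [key, hS1, hS3]
    exact final hε hKr hM2 hnr hKε hsK hcard hup hGc_low
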